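/- Let n ≥ 1 and let k_1, …, k_n ≥ 1 be integers, and let t > 0 satisfy n − 1 − t = Σ_{l=1}^n 1/(1 + t + ⋯ + t^{k_l}). Let χ_Γ be the special character with components α_j^{(l)} = S_{j−1}(t)/S_{k_l}(t) (1 ≤ j ≤ k_l, 1 ≤ l ≤ n) and root value λ = 1. Define the transformations S and T on characters χ = (α_1^{(1)}, …, α_{k_1}^{(1)}; …; α_1^{(n)}, …, α_{k_n}^{(n)}; λ) by: (Sχ)_j^{(l)} = α_{k_l}^{(l)} − α_{k_l − j}^{(l)} for 1 ≤ j ≤ k_l (with the convention α_0^{(l)} = 0) and root value λ' = Σ_{l=1}^n α_{k_l}^{(l)} − λ; and (Tχ)_j^{(l)} = λ − α_{k_l + 1 − j}^{(l)} for 1 ≤ j ≤ k_l with root value unchanged. Then T(S(χ_Γ)) = t^{-1} · χ_Γ, i.e. every component (including the root value) of T(S(χ_Γ)) equals t^{-1} times the corresponding component of χ_Γ. -/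

import Mathlib

theorem stmt_6 (n : ℕ) (hn : 1 ≤ n) (k : Fin n → ℕ) (hk : ∀ l, 1 ≤ k l)
    (t : ℝ) (ht : 0 < t)
    (heq : (n : ℝ) - 1 - t = ∑ l : Fin n, 1 / ∑ i ∈ Finset.range (k l + 1), t ^ i)
    (α : Fin n → ℕ → ℝ)
    (hα : ∀ l j, α l j =
      (∑ i ∈ Finset.range j, t ^ i) / ∑ i ∈ Finset.range (k l + 1), t ^ i)
    (α' : Fin n → ℕ → ℝ)
    (hα' : ∀ l j, 1 ≤ j → j ≤ k l → α' l j = α l (k l) - α l (k l - j))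
    (lam' : ℝ) (hlam' : lam' = (∑ l : Fin n, α l (k l)) - 1)
    (α'' : Fin n → ℕ → ℝ)
    (hα'' : ∀ l j, 1 ≤ j → j ≤ k l → α'' l j = lam' - α' l (k l + 1 - j)) :
    (∀ l j, 1 ≤ j → j ≤ k l → α'' l j = t⁻¹ * α l j) ∧ lam' = t⁻¹ * 1 := by
  have ht0 : t ≠ 0 := ne_of_gt ht
  have hSpos : ∀ l : Fin n, (0:ℝ) < ∑ i ∈ Finset.range (k l + 1), t ^ i := by
    intro l
    apply Finset.sum_pos (fun i _ => pow_pos ht i)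
    simp
  have hrec : ∀ m : ℕ, ∑ i ∈ Finset.range (m+1), t ^ i
      = 1 + t * ∑ i ∈ Finset.range m, t ^ i := by
    intro m
    rw [Finset.sum_range_succ', Finset.mul_sum]
    simp [pow_succ, mul_comm, add_comm]
  have hαk : ∀ l : Fin n, α l (k l)
      = t⁻¹ * (1 - 1 / ∑ i ∈ Finset.range (k l + 1), t ^ i) := by
    intro l
    have hS := (hSpos l).ne'
    rw [hα, hrec (k l)] at *
    field_simp
    ring
  have hlam : lam' = t⁻¹ := by
    rw [hlam']
    have hsum : (∑ l : Fin n, α l (k l))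
        = t⁻¹ * ((n:ℝ) - ∑ l : Fin n, 1 / ∑ i ∈ Finset.range (k l + 1), t ^ i) := by
      rw [Finset.sum_congr rfl (fun l _ => hαk l), ← Finset.mul_sum,
        Finset.sum_sub_distrib]
      simp
    rw [hsum, ← heq]
    field_simp
    ring
  constructor
  · intro l j hj1 hjk
    have hS := (hSpos l).ne'
    obtain ⟨m, rfl⟩ : ∃ m, j = m + 1 := ⟨j - 1, (Nat.succ_pred_eq_of_pos hj1).symm⟩
    have h1 : 1 ≤ k l + 1 - (m + 1) := by omega
    have h2 : k l + 1 - (m + 1) ≤ k l := by omega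
    have h3 : k l - (k l + 1 - (m + 1)) = m := by omega
    rw [hα'' l _ hj1 hjk, hα' l _ h1 h2, h3, hlam, hαk l, hα, hα, hrec m]
    field_simp
    ring
  · rw [hlam]; ring
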